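/- Let 0 < p < 1. Define f = ∑_{i=0}^∞ 2^{−2i(1/p−1)} · 2^{2i(1/p−1)} (D_{2^{2i+1}} − D_{2^{2i}}) (i.e. the martingale with f̂(j) = 1 for j ∈ [2^{2i}, 2^{2i+1}) for all i, f̂(j) = 0 otherwise). Then f ∈ H_p(G), ω(1/2^{2n}, f)_{H_p} = O(2^{−2n(1/p−1)}) as n → ∞, and yet ‖S_{2^{2k+1}−1} f − f‖_{L^{p,∞}} does not tend to 0 as k → ∞; in fact limsup_k ‖f − S_{2^{2k+1}−1} f‖_{L^{p,∞}} > 0. -/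

import Mathlib

open MeasureTheory ENNReal Filter
open scoped Classical

noncomputable section

instance : TopologicalSpace (ZMod 2) := ⊥
instance : DiscreteTopology (ZMod 2) := ⟨rfl⟩
instance : MeasurableSpace (ZMod 2) := ⊤
instance : BorelSpace (ZMod 2) := ⟨borel_eq_top_of_discrete.symm⟩
instance : IsTopologicalAddGroup (ZMod 2) where
  continuous_add := continuous_of_discreteTopology
  continuous_neg := continuous_of_discreteTopology

/-- The dyadic group `G = (ℤ/2)^ℕ`. -/
abbrev G2 : Type := ℕ → ZMod 2

/-- Normalized Haar (probability) measure on `G2`. -/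
def muG : Measure G2 :=
  Measure.addHaarMeasure ⟨⟨Set.univ, isCompact_univ⟩, by
    rw [interior_univ]; exact Set.univ_nonempty⟩

/-- Rademacher functions. -/
def rad (k : ℕ) (x : G2) : ℝ := (-1 : ℝ) ^ ((x k).val)

/-- Walsh–Paley functions. -/
def walsh (n : ℕ) (x : G2) : ℝ :=
  ∏ k ∈ Finset.range n, if n.testBit k then rad k x else 1

/-- Walsh–Dirichlet kernels. -/
def dirichlet (n : ℕ) (x : G2) : ℝ := ∑ k ∈ Finset.range n, walsh k x

/-- The cylinder sets `I_n`. -/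
def cyl (n : ℕ) : Set G2 := {x | ∀ i < n, x i = 0}

/-- Walsh–Fourier coefficients. -/
def fhat (f : G2 → ℝ) (k : ℕ) : ℝ := ∫ x, f x * walsh k x ∂muG

/-- Walsh–Fourier partial sums of a function. -/
def funS (f : G2 → ℝ) (n : ℕ) (x : G2) : ℝ :=
  ∑ k ∈ Finset.range n, fhat f k * walsh k x

/-- Partial sums of the Walsh series of a dyadic martingale given by coefficients `c`. -/
def mS (c : ℕ → ℝ) (n : ℕ) (x : G2) : ℝ := ∑ k ∈ Finset.range n, c k * walsh k x

/-- The martingale maximal function. -/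
def mMax (c : ℕ → ℝ) (x : G2) : ℝ≥0∞ := ⨆ n : ℕ, (‖mS c (2 ^ n) x‖₊ : ℝ≥0∞)

/-- The martingale Hardy space quasi-norm `H_p`. -/
def mHp (p : ℝ) (c : ℕ → ℝ) : ℝ≥0∞ := (∫⁻ x, (mMax c x) ^ p ∂muG) ^ (1 / p)

/-- The maximal function of an integrable function. -/
def funMax (f : G2 → ℝ) (x : G2) : ℝ≥0∞ := ⨆ n : ℕ, (‖funS f (2 ^ n) x‖₊ : ℝ≥0∞)

/-- The Hardy space quasi-norm of an integrable function. -/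
def funHp (p : ℝ) (f : G2 → ℝ) : ℝ≥0∞ := (∫⁻ x, (funMax f x) ^ p ∂muG) ^ (1 / p)

/-- Weak `L^p` quasi-norm. -/
def weakLp (p : ℝ) (f : G2 → ℝ) : ℝ≥0∞ :=
  ⨆ t : NNReal, (t : ℝ≥0∞) * (muG {x | (t : ℝ) < |f x|}) ^ (1 / p)


/-- Coefficients of the counterexample martingale: `̂f(j) = 1` on the blocks
`[2^{2i}, 2^{2i+1})`. -/
def cc16 : ℕ → ℝ := fun j => if ∃ i : ℕ, 2 ^ (2 * i) ≤ j ∧ j < 2 ^ (2 * i + 1) then 1 else 0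

/-- The a.e.-defined limit function of the counterexample martingale. -/
def F16 (x : G2) : ℝ := ∑' i : ℕ, (dirichlet (2 ^ (2 * i + 1)) x - dirichlet (2 ^ (2 * i)) x)

lemma muG_univ : muG Set.univ = 1 := Measure.addHaarMeasure_self

instance : muG.IsAddLeftInvariant := by
  unfold muG; infer_instance

lemma muG_inv (a : G2) (s : Set G2) : muG ((fun x => a + x) ⁻¹' s) = muG s :=
  measure_preimage_add muG a s

lemma measurable_cyl (n : ℕ) : MeasurableSet (cyl n) := by
  have : cyl n = ⋂ i ∈ Finset.range n, (fun x : G2 => x i) ⁻¹' {0} := by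
    ext x; simp [cyl]
  rw [this]
  exact Finset.measurableSet_biInter _ fun i _ =>
    (measurable_pi_apply i) (MeasurableSet.singleton 0)

lemma cyl_anti {m n : ℕ} (h : m ≤ n) : cyl n ⊆ cyl m :=
  fun x hx i hi => hx i (lt_of_lt_of_le hi h)

def ee (n : ℕ) : G2 := fun i => if i = n then 1 else 0

lemma zmod2_cases (a : ZMod 2) : a = 0 ∨ a = 1 := by revert a; decide

lemma cyl_split (n : ℕ) :
    cyl n = cyl (n+1) ∪ (fun x => ee n + x) ⁻¹' cyl (n+1) := by
  ext x
  constructor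
  · intro hx
    rcases zmod2_cases (x n) with h | h
    · left; intro i hi
      rcases Nat.lt_succ_iff_lt_or_eq.mp hi with hi' | rfl
      · exact hx i hi'
      · exact h
    · right; intro i hi
      rcases Nat.lt_succ_iff_lt_or_eq.mp hi with hi' | rfl
      · simp only [Pi.add_apply, ee, if_neg (Nat.ne_of_lt hi'), zero_add]
        exact hx i hi'
      · simp only [Pi.add_apply, ee, if_pos rfl, h]; decide
  · rintro (hx | hx) i hi
    · exact hx i (Nat.lt_succ_of_lt hi)
    · have := hx i (Nat.lt_succ_of_lt hi)
      simpa only [Pi.add_apply, ee, if_neg (Nat.ne_of_lt hi), zero_add] using this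

lemma cyl_split_disj (n : ℕ) :
    Disjoint (cyl (n+1)) ((fun x => ee n + x) ⁻¹' cyl (n+1)) := by
  rw [Set.disjoint_left]
  intro x hx hx'
  have h1 : x n = 0 := hx n (Nat.lt_succ_self n)
  have h2 : (ee n + x) n = 0 := hx' n (Nat.lt_succ_self n)
  rw [Pi.add_apply, h1, add_zero] at h2
  simp [ee] at h2

lemma muG_cyl_le (n : ℕ) : muG (cyl n) ≤ (2 ^ n : ℝ≥0∞)⁻¹ := by
  have key : ∀ n : ℕ, (2 ^ n : ℝ≥0∞) * muG (cyl n) ≤ 1 := by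
    intro n
    induction n with
    | zero =>
      have : cyl 0 = Set.univ := by ext x; simp [cyl]
      simp [this, muG_univ]
    | succ n ih =>
      have hsplit := cyl_split n
      have hdisj := cyl_split_disj n
      have hmeas : MeasurableSet ((fun x => ee n + x) ⁻¹' cyl (n+1)) :=
        (measurable_const_add (ee n)) (measurable_cyl (n+1))
      have : muG (cyl n) = muG (cyl (n+1)) + muG ((fun x => ee n + x) ⁻¹' cyl (n+1)) := by
        rw [hsplit, measure_union hdisj hmeas]
      rw [muG_inv] at this
      calc (2:ℝ≥0∞) ^ (n+1) * muG (cyl (n+1))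
          = 2 ^ n * (muG (cyl (n+1)) + muG (cyl (n+1))) := by rw [pow_succ, mul_assoc, two_mul (muG (cyl (n+1)))]
        _ = 2 ^ n * muG (cyl n) := by rw [← this]
        _ ≤ 1 := ih
  rw [ENNReal.le_inv_iff_mul_le]
  rw [mul_comm]
  exact key n

lemma muG_interCyl : muG (⋂ m, cyl m) = 0 := by
  by_contra h
  obtain ⟨m, hm⟩ := ENNReal.exists_inv_nat_lt h
  have h1 : muG (⋂ m, cyl m) ≤ (2 ^ m : ℝ≥0∞)⁻¹ :=
    le_trans (measure_mono (Set.iInter_subset _ m)) (muG_cyl_le m)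
  have h2 : ((2:ℝ≥0∞) ^ m)⁻¹ ≤ (m : ℝ≥0∞)⁻¹ := by
    apply ENNReal.inv_le_inv.mpr
    exact_mod_cast le_trans (Nat.cast_le.mpr (Nat.le_of_lt (Nat.lt_two_pow_self (n := m)))) le_rfl
  exact absurd (lt_of_le_of_lt (h1.trans h2) hm) (lt_irrefl _)

lemma rad_cases (k : ℕ) (x : G2) : rad k x = 1 ∨ rad k x = -1 := by
  unfold rad
  rcases Nat.even_or_odd ((x k).val) with h | h
  · left; exact h.neg_one_pow
  · right; exact h.neg_one_pow

lemma abs_walsh (n : ℕ) (x : G2) : |walsh n x| = 1 := by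
  unfold walsh
  rw [Finset.abs_prod]
  apply Finset.prod_eq_one
  intro k _
  by_cases h : n.testBit k
  · rw [if_pos h]; rcases rad_cases k x with h' | h' <;> rw [h'] <;> norm_num
  · rw [if_neg h]; norm_num

lemma walsh_eq_prod {n m : ℕ} (h : n < 2 ^ m) (x : G2) :
    walsh n x = ∏ k ∈ Finset.range m, if n.testBit k then rad k x else 1 := by
  unfold walsh
  rcases le_total n m with hnm | hnm
  · apply Finset.prod_subset (Finset.range_subset_range.mpr hnm)
    intro k _ hk
    rw [Finset.mem_range, not_lt] at hk
    simp [Nat.testBit_lt_two_pow (lt_of_lt_of_le (Nat.lt_two_pow_self (n := n)) (Nat.pow_le_pow_right (by norm_num) hk))]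
  · symm
    apply Finset.prod_subset (Finset.range_subset_range.mpr hnm)
    intro k _ hk
    rw [Finset.mem_range, not_lt] at hk
    simp [Nat.testBit_lt_two_pow (lt_of_lt_of_le h (Nat.pow_le_pow_right (by norm_num) hk))]

lemma walsh_two_pow_add {n k : ℕ} (hk : k < 2 ^ n) (x : G2) :
    walsh (2 ^ n + k) x = rad n x * walsh k x := by
  have h1 : 2 ^ n + k < 2 ^ (n + 1) := by
    rw [pow_succ, mul_two]; omega
  rw [walsh_eq_prod h1 x, walsh_eq_prod (lt_of_lt_of_le hk (Nat.pow_le_pow_right (by norm_num) (Nat.le_succ n))) x]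
  rw [Finset.prod_range_succ, Finset.prod_range_succ]
  have ht : (2 ^ n + k).testBit n = true := by
    rw [Nat.testBit_two_pow_add_eq, Nat.testBit_lt_two_pow hk]; rfl
  have ht' : k.testBit n = false := Nat.testBit_lt_two_pow hk
  rw [ht, ht', if_pos rfl, if_neg (by simp)]
  rw [mul_one, mul_comm]
  congr 1
  apply Finset.prod_congr rfl
  intro i hi
  rw [Finset.mem_range] at hi
  rw [Nat.testBit_two_pow_add_gt hi]

lemma rad_eq (n : ℕ) (x : G2) : rad n x = if x n = 0 then 1 else -1 := by
  unfold rad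
  rcases zmod2_cases (x n) with h | h
  · rw [h, if_pos rfl, show (0 : ZMod 2).val = 0 from rfl]; norm_num [ZMod.val]
  · rw [h, if_neg (by decide), show (1 : ZMod 2).val = 1 from rfl]
    norm_num [ZMod.val]

lemma dirichlet_two_pow (n : ℕ) (x : G2) :
    dirichlet (2 ^ n) x = if x ∈ cyl n then (2 ^ n : ℝ) else 0 := by
  induction n with
  | zero =>
    have : cyl 0 = Set.univ := by ext y; simp [cyl]
    simp [this, dirichlet, walsh]
  | succ n ih =>
    have hsum : dirichlet (2 ^ (n+1)) x = dirichlet (2 ^ n) x * (1 + rad n x) := by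
      unfold dirichlet
      have h2 : 2 ^ (n+1) = 2 ^ n + 2 ^ n := by rw [pow_succ, mul_two]
      rw [h2, Finset.sum_range_add]
      have : ∀ i ∈ Finset.range (2 ^ n), walsh (2 ^ n + i) x = rad n x * walsh i x := by
        intro i hi
        exact walsh_two_pow_add (Finset.mem_range.mp hi) x
      rw [Finset.sum_congr rfl this, ← Finset.mul_sum]
      ring
    rw [hsum, ih, rad_eq]
    by_cases hx : x ∈ cyl (n+1)
    · have hx' : x ∈ cyl n := cyl_anti (Nat.le_succ n) hx
      have hxn : x n = 0 := hx n (Nat.lt_succ_self n)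
      rw [if_pos hx', if_pos hxn, if_pos hx]
      rw [pow_succ]; ring
    · by_cases hx' : x ∈ cyl n
      · have hxn : x n ≠ 0 := by
          intro h0
          apply hx
          intro i hi
          rcases Nat.lt_succ_iff_lt_or_eq.mp hi with hi' | rfl
          · exact hx' i hi'
          · exact h0
        rw [if_pos hx', if_neg hxn, if_neg hx]; ring
      · rw [if_neg hx', if_neg hx]; ring

lemma dirichlet_two_pow_zero {n : ℕ} {x : G2} (hx : x ∉ cyl n) :
    dirichlet (2 ^ n) x = 0 := by
  rw [dirichlet_two_pow, if_neg hx]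

lemma abs_dirichlet_two_pow_le (n : ℕ) (x : G2) : |dirichlet (2 ^ n) x| ≤ 2 ^ n := by
  rw [dirichlet_two_pow]
  split
  · rw [abs_of_nonneg (by positivity)]
  · simp

def ccT (n : ℕ) : ℕ → ℝ := fun j => if j < 2 ^ (2 * n) then 0 else cc16 j

lemma two_pow_lt_iff {a b : ℕ} : 2 ^ a < 2 ^ b ↔ a < b :=
  Nat.pow_lt_pow_iff_right (by norm_num)

lemma cc16_eq_one {i j : ℕ} (h1 : 2 ^ (2 * i) ≤ j) (h2 : j < 2 ^ (2 * i + 1)) :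
    cc16 j = 1 := by
  unfold cc16
  rw [if_pos ⟨i, h1, h2⟩]

lemma cc16_eq_zero_odd {i j : ℕ} (h1 : 2 ^ (2 * i + 1) ≤ j) (h2 : j < 2 ^ (2 * i + 2)) :
    cc16 j = 0 := by
  unfold cc16
  rw [if_neg]
  rintro ⟨l, hl1, hl2⟩
  have a1 : 2 * l < 2 * i + 2 := two_pow_lt_iff.mp (lt_of_le_of_lt hl1 h2)
  have a2 : 2 * i + 1 < 2 * l + 1 := two_pow_lt_iff.mp (lt_of_le_of_lt h1 hl2)
  omega

lemma ccT_Ico {n m j : ℕ} (hj1 : 2 ^ m ≤ j) (hj2 : j < 2 ^ (m + 1)) :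
    ccT n j = if Even m ∧ 2 * n ≤ m then 1 else 0 := by
  by_cases hm : m < 2 * n
  · rw [if_neg (by omega)]
    unfold ccT
    rw [if_pos (lt_of_lt_of_le hj2 (Nat.pow_le_pow_right (by norm_num) (by omega)))]
  · push_neg at hm
    have hout : ¬ j < 2 ^ (2 * n) := by
      push_neg
      exact le_trans (Nat.pow_le_pow_right (by norm_num) hm) hj1
    unfold ccT
    rw [if_neg hout]
    rcases Nat.even_or_odd m with he | ho
    · obtain ⟨i, rfl⟩ := he
      rw [if_pos ⟨⟨i, by ring⟩, hm⟩]
      exact cc16_eq_one (i := i) (by rw [two_mul]; exact hj1) (by rw [two_mul]; exact hj2)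
    · obtain ⟨i, rfl⟩ := ho
      rw [if_neg (by rintro ⟨⟨l, hl⟩, -⟩; omega)]
      unfold cc16
      rw [if_neg]
      rintro ⟨l, hl1, hl2⟩
      have a1 : 2 * i + 1 < 2 * l + 1 := two_pow_lt_iff.mp (lt_of_le_of_lt hj1 hl2)
      have a2 : 2 * l < 2 * i + 1 + 1 := two_pow_lt_iff.mp (lt_of_le_of_lt hl1 hj2)
      omega

lemma mS_ccT_blocks (n m : ℕ) (x : G2) :
    mS (ccT n) (2 ^ m) x =
      ∑ l ∈ Finset.range m, (if Even l ∧ 2 * n ≤ l then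
        dirichlet (2 ^ (l + 1)) x - dirichlet (2 ^ l) x else 0) := by
  induction m with
  | zero =>
    simp [mS, ccT]
  | succ m ih =>
    rw [Finset.sum_range_succ, ← ih]
    unfold mS
    have h2 : 2 ^ (m + 1) = 2 ^ m + 2 ^ m := by rw [pow_succ, mul_two]
    rw [h2, Finset.sum_range_add]
    congr 1
    have hval : ∀ i ∈ Finset.range (2 ^ m),
        ccT n (2 ^ m + i) * walsh (2 ^ m + i) x =
          (if Even m ∧ 2 * n ≤ m then 1 else 0) * walsh (2 ^ m + i) x := by
      intro i hi
      rw [Finset.mem_range] at hi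
      rw [ccT_Ico (Nat.le_add_right _ _) (by omega)]
    rw [Finset.sum_congr rfl hval]
    have hD : dirichlet (2 ^ m + 2 ^ m) x - dirichlet (2 ^ m) x
        = ∑ i ∈ Finset.range (2 ^ m), walsh (2 ^ m + i) x := by
      unfold dirichlet
      rw [Finset.sum_range_add]
      ring
    by_cases hc : Even m ∧ 2 * n ≤ m
    · rw [if_pos hc, if_pos hc, hD]
      simp
    · rw [if_neg hc, if_neg hc]
      simp

lemma mS_ccT_zero {n m : ℕ} {x : G2} (hx : x ∉ cyl (2 * n)) :
    mS (ccT n) (2 ^ m) x = 0 := by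
  rw [mS_ccT_blocks]
  apply Finset.sum_eq_zero
  intro l hl
  split
  · next h =>
    rw [dirichlet_two_pow_zero (fun hc => hx (cyl_anti h.2 hc)),
        dirichlet_two_pow_zero (fun hc => hx (cyl_anti (by omega) hc))]
    ring
  · rfl

lemma abs_mS_ccT_le {n m N : ℕ} {x : G2} (hx : x ∉ cyl (N + 1)) :
    |mS (ccT n) (2 ^ m) x| ≤ 2 ^ (N + 3) := by
  rw [mS_ccT_blocks]
  calc |∑ l ∈ Finset.range m, (if Even l ∧ 2 * n ≤ l then
        dirichlet (2 ^ (l + 1)) x - dirichlet (2 ^ l) x else 0)|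
      ≤ ∑ l ∈ Finset.range m, |(if Even l ∧ 2 * n ≤ l then
        dirichlet (2 ^ (l + 1)) x - dirichlet (2 ^ l) x else 0)| := Finset.abs_sum_le_sum_abs _ _
    _ ≤ ∑ l ∈ Finset.range m, (if l ≤ N then (2:ℝ) ^ (l + 2) else 0) := by
        apply Finset.sum_le_sum
        intro l _
        by_cases hl : l ≤ N
        · rw [if_pos hl]
          split
          · calc |dirichlet (2 ^ (l + 1)) x - dirichlet (2 ^ l) x|
                ≤ |dirichlet (2 ^ (l + 1)) x| + |dirichlet (2 ^ l) x| := abs_sub _ _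
              _ ≤ 2 ^ (l + 1) + 2 ^ l :=
                  add_le_add (abs_dirichlet_two_pow_le _ _) (abs_dirichlet_two_pow_le _ _)
              _ ≤ 2 ^ (l + 2) := by
                  have h0 : (0:ℝ) ≤ 2 ^ l := by positivity
                  have e1 : (2:ℝ) ^ (l + 1) = 2 ^ l * 2 := pow_succ 2 l
                  have e2 : (2:ℝ) ^ (l + 2) = 2 ^ (l + 1) * 2 := pow_succ 2 (l + 1)
                  linarith
          · simp
        · rw [if_neg hl]
          push_neg at hl
          split
          · rw [dirichlet_two_pow_zero (fun hc => hx (cyl_anti hl hc)),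
                dirichlet_two_pow_zero (fun hc => hx (cyl_anti (by omega) hc))]
            simp
          · simp
    _ ≤ ∑ l ∈ Finset.range (N + 1), (2:ℝ) ^ (l + 2) := by
        have : ∀ l ∈ Finset.range m, (if l ≤ N then (2:ℝ) ^ (l + 2) else 0)
            = if l ≤ N then (2:ℝ) ^ (l + 2) else 0 := fun _ _ => rfl
        rw [← Finset.sum_filter (fun l => l ≤ N) (fun l => (2:ℝ) ^ (l + 2))]
        apply Finset.sum_le_sum_of_subset_of_nonneg
        · intro l hl
          rw [Finset.mem_filter] at hl
          rw [Finset.mem_range]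
          omega
        · intro l _ _
          positivity
    _ ≤ 2 ^ (N + 3) := by
        have key : ∀ K : ℕ, ∑ l ∈ Finset.range K, (2:ℝ) ^ (l + 2) ≤ 2 ^ (K + 2) := by
          intro K
          induction K with
          | zero => norm_num
          | succ K ihK =>
            rw [Finset.sum_range_succ]
            have : (2:ℝ) ^ (K + 1 + 2) = 2 ^ (K + 2) + 2 ^ (K + 2) := by ring
            rw [this]
            linarith
        exact key (N + 1)

lemma mMax_ccT_zero {n : ℕ} {x : G2} (hx : x ∉ cyl (2 * n)) : mMax (ccT n) x = 0 := by
  unfold mMax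
  simp [mS_ccT_zero hx]

lemma mMax_ccT_le {n N : ℕ} {x : G2} (hx : x ∉ cyl (N + 1)) :
    mMax (ccT n) x ≤ (2 : ℝ≥0∞) ^ (N + 3) := by
  apply iSup_le
  intro m
  have h1 : |mS (ccT n) (2 ^ m) x| ≤ 2 ^ (N + 3) := abs_mS_ccT_le hx
  have h2 : (‖mS (ccT n) (2 ^ m) x‖₊ : ℝ≥0∞) = ENNReal.ofReal |mS (ccT n) (2 ^ m) x| := by
    rw [← Real.norm_eq_abs, ofReal_norm, enorm_eq_nnnorm]
  rw [h2]
  calc ENNReal.ofReal |mS (ccT n) (2 ^ m) x| ≤ ENNReal.ofReal ((2:ℝ) ^ (N + 3)) :=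
        ENNReal.ofReal_le_ofReal h1
    _ = (2 : ℝ≥0∞) ^ (N + 3) := by
        rw [ENNReal.ofReal_pow (by norm_num)]
        norm_num

def EE (n j : ℕ) : Set G2 := cyl (2 * n + j) \ cyl (2 * n + j + 1)

def ZZ : Set G2 := ⋂ m, cyl m

lemma lint_ccT_le {p : ℝ} (hp : 0 < p) (n : ℕ) :
    ∫⁻ x, mMax (ccT n) x ^ p ∂muG ≤
      (2 : ℝ≥0∞) ^ ((2 * (n:ℝ) + 3) * p - 2 * n) * (1 - (2:ℝ≥0∞) ^ (p - 1))⁻¹ := by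
  set h : G2 → ℝ≥0∞ := fun x =>
    (∑' j : ℕ, (EE n j).indicator (fun _ => (2:ℝ≥0∞) ^ (((2*n+j+3 : ℕ) : ℝ) * p)) x) +
      ZZ.indicator (fun _ => (⊤ : ℝ≥0∞)) x with hh
  have hpt : ∀ x, mMax (ccT n) x ^ p ≤ h x := by
    intro x
    by_cases hZx : x ∈ ZZ
    · rw [hh]
      simp only [Set.indicator_of_mem hZx]
      simp
    · by_cases hcyl : x ∈ cyl (2 * n)
      · have hex : ∃ m, x ∉ cyl m := by
          by_contra hco
          push_neg at hco
          exact hZx (Set.mem_iInter.mpr hco)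
        set M := Nat.find hex with hM
        have hMspec : x ∉ cyl M := Nat.find_spec hex
        have hMmin : ∀ k < M, x ∈ cyl k := fun k hk => of_not_not (Nat.find_min hex hk)
        have hM1 : 1 ≤ M := by
          rcases Nat.eq_zero_or_pos M with h0 | h1
          · exfalso; apply hMspec; rw [h0]; intro i hi; omega
          · exact h1
        have hM2n : 2 * n + 1 ≤ M := by
          by_contra hcon
          push_neg at hcon
          exact hMspec (cyl_anti (by omega) hcyl)
        set N := M - 1 with hN
        have hxN : x ∈ cyl N := hMmin N (by omega)
        have hxN1 : x ∉ cyl (N + 1) := by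
          have : N + 1 = M := by omega
          rw [this]; exact hMspec
        set j := N - 2 * n with hj
        have hNj : 2 * n + j = N := by omega
        have hmem : x ∈ EE n j := by
          constructor
          · rw [hNj]; exact hxN
          · rw [hNj]; exact hxN1
        have hb : mMax (ccT n) x ^ p ≤ (2:ℝ≥0∞) ^ (((2*n+j+3 : ℕ) : ℝ) * p) := by
          calc mMax (ccT n) x ^ p ≤ ((2:ℝ≥0∞) ^ (N + 3)) ^ p :=
                ENNReal.rpow_le_rpow (mMax_ccT_le hxN1) hp.le
            _ = (2:ℝ≥0∞) ^ (((N + 3 : ℕ) : ℝ) * p) := by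
                rw [ENNReal.rpow_mul, ENNReal.rpow_natCast]
            _ = (2:ℝ≥0∞) ^ (((2*n+j+3 : ℕ) : ℝ) * p) := by rw [hNj]
        calc mMax (ccT n) x ^ p ≤ (2:ℝ≥0∞) ^ (((2*n+j+3 : ℕ) : ℝ) * p) := hb
          _ ≤ ∑' i : ℕ, (EE n i).indicator (fun _ => (2:ℝ≥0∞) ^ (((2*n+i+3 : ℕ) : ℝ) * p)) x := by
              have := ENNReal.le_tsum (f := fun i : ℕ =>
                (EE n i).indicator (fun _ => (2:ℝ≥0∞) ^ (((2*n+i+3 : ℕ) : ℝ) * p)) x) j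
              rwa [Set.indicator_of_mem hmem] at this
          _ ≤ h x := by rw [hh]; exact le_self_add
      · rw [mMax_ccT_zero hcyl, ENNReal.zero_rpow_of_pos hp]
        exact zero_le
  have hEmeas : ∀ j, MeasurableSet (EE n j) :=
    fun j => (measurable_cyl _).diff (measurable_cyl _)
  have hZmeas : MeasurableSet ZZ := MeasurableSet.iInter fun m => measurable_cyl m
  have hint : ∫⁻ x, h x ∂muG =
      (∑' j : ℕ, (2:ℝ≥0∞) ^ (((2*n+j+3 : ℕ) : ℝ) * p) * muG (EE n j)) + ⊤ * muG ZZ := by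
    rw [hh]
    rw [lintegral_add_left (Measurable.ennreal_tsum fun j =>
      (measurable_const.indicator (hEmeas j)))]
    congr 1
    · rw [lintegral_tsum fun j => (measurable_const.indicator (hEmeas j)).aemeasurable]
      congr 1
      funext j
      rw [lintegral_indicator (hEmeas j) _, setLIntegral_const]
    · rw [lintegral_indicator hZmeas _, setLIntegral_const]
  have hZ0 : muG ZZ = 0 := muG_interCyl
  have hsum : (∑' j : ℕ, (2:ℝ≥0∞) ^ (((2*n+j+3 : ℕ) : ℝ) * p) * muG (EE n j)) ≤
      (2 : ℝ≥0∞) ^ ((2 * (n:ℝ) + 3) * p - 2 * n) * (1 - (2:ℝ≥0∞) ^ (p - 1))⁻¹ := by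
    have hterm : ∀ j : ℕ, (2:ℝ≥0∞) ^ (((2*n+j+3 : ℕ) : ℝ) * p) * muG (EE n j) ≤
        (2 : ℝ≥0∞) ^ ((2 * (n:ℝ) + 3) * p - 2 * n) * ((2:ℝ≥0∞) ^ (p - 1)) ^ j := by
      intro j
      have hmu : muG (EE n j) ≤ (2:ℝ≥0∞) ^ (-((2 * n + j : ℕ) : ℝ)) := by
        rw [ENNReal.rpow_neg, ENNReal.rpow_natCast]
        exact le_trans (measure_mono Set.diff_subset) (muG_cyl_le _)
      calc (2:ℝ≥0∞) ^ (((2*n+j+3 : ℕ) : ℝ) * p) * muG (EE n j)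
          ≤ (2:ℝ≥0∞) ^ (((2*n+j+3 : ℕ) : ℝ) * p) * (2:ℝ≥0∞) ^ (-((2 * n + j : ℕ) : ℝ)) :=
            mul_le_mul_right hmu _
        _ = (2:ℝ≥0∞) ^ (((2*n+j+3 : ℕ) : ℝ) * p + -((2 * n + j : ℕ) : ℝ)) := by
            rw [← ENNReal.rpow_add _ _ (by norm_num) (by norm_num)]
        _ = (2:ℝ≥0∞) ^ (((2 * (n:ℝ) + 3) * p - 2 * n) + (j : ℝ) * (p - 1)) := by
            congr 1
            push_cast
            ring
        _ = (2 : ℝ≥0∞) ^ ((2 * (n:ℝ) + 3) * p - 2 * n) * ((2:ℝ≥0∞) ^ (p - 1)) ^ j := by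
            rw [ENNReal.rpow_add _ _ (by norm_num) (by norm_num)]
            congr 1
            rw [mul_comm (j:ℝ), ENNReal.rpow_mul, ENNReal.rpow_natCast]
    calc (∑' j : ℕ, (2:ℝ≥0∞) ^ (((2*n+j+3 : ℕ) : ℝ) * p) * muG (EE n j))
        ≤ ∑' j : ℕ, (2 : ℝ≥0∞) ^ ((2 * (n:ℝ) + 3) * p - 2 * n) * ((2:ℝ≥0∞) ^ (p - 1)) ^ j :=
          ENNReal.tsum_le_tsum hterm
      _ = (2 : ℝ≥0∞) ^ ((2 * (n:ℝ) + 3) * p - 2 * n) * ∑' j : ℕ, ((2:ℝ≥0∞) ^ (p - 1)) ^ j :=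
          ENNReal.tsum_mul_left
      _ = (2 : ℝ≥0∞) ^ ((2 * (n:ℝ) + 3) * p - 2 * n) * (1 - (2:ℝ≥0∞) ^ (p - 1))⁻¹ := by
          rw [ENNReal.tsum_geometric]
  calc ∫⁻ x, mMax (ccT n) x ^ p ∂muG ≤ ∫⁻ x, h x ∂muG := lintegral_mono hpt
    _ = (∑' j : ℕ, (2:ℝ≥0∞) ^ (((2*n+j+3 : ℕ) : ℝ) * p) * muG (EE n j)) + ⊤ * muG ZZ := hint
    _ = ∑' j : ℕ, (2:ℝ≥0∞) ^ (((2*n+j+3 : ℕ) : ℝ) * p) * muG (EE n j) := by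
        rw [hZ0, mul_zero, add_zero]
    _ ≤ _ := hsum

lemma mHp_ccT_le {p : ℝ} (hp : 0 < p) (hp1 : p < 1) (n : ℕ) :
    mHp p (ccT n) ≤ (2:ℝ≥0∞) ^ (-(2 * (n:ℝ)) * (1 / p - 1)) *
      ((2:ℝ≥0∞) ^ (3:ℝ) * ((1 - (2:ℝ≥0∞) ^ (p - 1))⁻¹) ^ (1 / p)) := by
  unfold mHp
  have h1 : (∫⁻ x, mMax (ccT n) x ^ p ∂muG) ^ (1 / p) ≤
      ((2 : ℝ≥0∞) ^ ((2 * (n:ℝ) + 3) * p - 2 * n) * (1 - (2:ℝ≥0∞) ^ (p - 1))⁻¹) ^ (1 / p) :=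
    ENNReal.rpow_le_rpow (lint_ccT_le hp n) (by positivity)
  refine le_trans h1 (le_of_eq ?_)
  rw [ENNReal.mul_rpow_of_nonneg _ _ (by positivity)]
  rw [← ENNReal.rpow_mul]
  have harith : ((2 * (n:ℝ) + 3) * p - 2 * n) * (1 / p) = -(2 * (n:ℝ)) * (1 / p - 1) + 3 := by
    field_simp
    ring
  rw [harith, ENNReal.rpow_add _ _ (by norm_num) (by norm_num)]
  ring

lemma Bfacts {p : ℝ} (hp : 0 < p) (hp1 : p < 1) :
    ((2:ℝ≥0∞) ^ (3:ℝ) * ((1 - (2:ℝ≥0∞) ^ (p - 1))⁻¹) ^ (1 / p)) ≠ 0 ∧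
    ((2:ℝ≥0∞) ^ (3:ℝ) * ((1 - (2:ℝ≥0∞) ^ (p - 1))⁻¹) ^ (1 / p)) ≠ ⊤ := by
  have hr1 : (2:ℝ≥0∞) ^ (p - 1) < 1 :=
    ENNReal.rpow_lt_one_of_one_lt_of_neg (by norm_num) (by linarith)
  have hw_ne_top : (1 - (2:ℝ≥0∞) ^ (p - 1)) ≠ ⊤ :=
    ne_top_of_le_ne_top ENNReal.one_ne_top tsub_le_self
  have hw_ne_zero : (1 - (2:ℝ≥0∞) ^ (p - 1)) ≠ 0 :=
    fun h => absurd (tsub_eq_zero_iff_le.mp h) (not_le.mpr hr1)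
  have hz_pos : 0 < (1 - (2:ℝ≥0∞) ^ (p - 1))⁻¹ := ENNReal.inv_pos.mpr hw_ne_top
  have hz_ne_top : (1 - (2:ℝ≥0∞) ^ (p - 1))⁻¹ ≠ ⊤ := ENNReal.inv_ne_top.mpr hw_ne_zero
  constructor
  · apply mul_ne_zero
    · exact (ENNReal.rpow_pos (by norm_num) (by norm_num)).ne'
    · exact (ENNReal.rpow_pos hz_pos hz_ne_top).ne'
  · apply ENNReal.mul_ne_top
    · exact ENNReal.rpow_ne_top_of_nonneg (by norm_num) (by norm_num)
    · exact ENNReal.rpow_ne_top_of_nonneg (by positivity) hz_ne_top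

lemma conj2 {p : ℝ} (hp : 0 < p) (hp1 : p < 1) :
    ∃ C : ℝ, 0 < C ∧ ∀ n : ℕ,
      mHp p (fun j => if j < 2 ^ (2 * n) then 0 else cc16 j) ≤
        ENNReal.ofReal (C * (2 : ℝ) ^ (-(2 * n : ℝ) * (1 / p - 1))) := by
  set Q := ((2:ℝ≥0∞) ^ (3:ℝ) * ((1 - (2:ℝ≥0∞) ^ (p - 1))⁻¹) ^ (1 / p)) with hQ
  obtain ⟨hQ0, hQtop⟩ := Bfacts hp hp1
  refine ⟨Q.toReal, ENNReal.toReal_pos hQ0 hQtop, fun n => ?_⟩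
  have heq : mHp p (fun j => if j < 2 ^ (2 * n) then 0 else cc16 j) = mHp p (ccT n) := rfl
  rw [heq]
  have hrhs : ENNReal.ofReal (Q.toReal * (2 : ℝ) ^ (-(2 * n : ℝ) * (1 / p - 1))) =
      Q * (2:ℝ≥0∞) ^ (-(2 * (n:ℝ)) * (1 / p - 1)) := by
    rw [ENNReal.ofReal_mul ENNReal.toReal_nonneg, ENNReal.ofReal_toReal hQtop]
    congr 1
    rw [← ENNReal.ofReal_rpow_of_pos (by norm_num)]
    norm_num
  rw [hrhs, mul_comm]
  exact mHp_ccT_le hp hp1 n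

lemma conj1 {p : ℝ} (hp : 0 < p) (hp1 : p < 1) : mHp p cc16 < ⊤ := by
  have heq : cc16 = ccT 0 := by
    funext j
    unfold ccT
    rcases Nat.eq_zero_or_pos j with rfl | hj
    · simp [cc16]
    · rw [if_neg (by omega)]
  rw [heq]
  obtain ⟨hQ0, hQtop⟩ := Bfacts hp hp1
  apply lt_of_le_of_lt (mHp_ccT_le hp hp1 0)
  apply ENNReal.mul_lt_top
  · exact ENNReal.rpow_lt_top_of_nonneg (by norm_num) (by norm_num)
  · exact hQtop.lt_top

lemma even_sum_reindex (K : ℕ) (g : ℕ → ℝ) :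
    ∑ l ∈ Finset.range (2 * K), (if Even l then g l else 0) = ∑ i ∈ Finset.range K, g (2 * i) := by
  induction K with
  | zero => simp
  | succ K ih =>
    have h2 : 2 * (K + 1) = (2 * K) + 1 + 1 := by ring
    rw [h2, Finset.sum_range_succ, Finset.sum_range_succ, Finset.sum_range_succ, ih]
    rw [if_pos (even_two_mul K), if_neg (by simp [Nat.even_add_one, parity_simps])]
    ring

lemma cc16_eq_ccT0 : cc16 = ccT 0 := by
  funext j
  unfold ccT
  rcases Nat.eq_zero_or_pos j with rfl | hj
  · simp [cc16]
  · rw [if_neg (by omega)]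

lemma diff_eq_walsh {k : ℕ} {x : G2} (hx : x ∉ cyl (2 * k + 2)) :
    F16 x - mS cc16 (2 ^ (2 * k + 1) - 1) x = walsh (2 ^ (2 * k + 1) - 1) x := by
  have hF : F16 x = mS cc16 (2 ^ (2 * k + 2)) x := by
    unfold F16
    have hvanish : ∀ i ∉ Finset.range (k + 1),
        dirichlet (2 ^ (2 * i + 1)) x - dirichlet (2 ^ (2 * i)) x = 0 := by
      intro i hi
      rw [Finset.mem_range, not_lt] at hi
      rw [dirichlet_two_pow_zero (fun hc => hx (cyl_anti (by omega) hc)),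
          dirichlet_two_pow_zero (fun hc => hx (cyl_anti (by omega) hc))]
      ring
    rw [tsum_eq_sum hvanish]
    rw [cc16_eq_ccT0]
    have hblocks := mS_ccT_blocks 0 (2 * k + 2) x
    rw [hblocks]
    have hsimp : ∀ l ∈ Finset.range (2 * k + 2),
        (if Even l ∧ 2 * 0 ≤ l then dirichlet (2 ^ (l + 1)) x - dirichlet (2 ^ l) x else 0)
          = (if Even l then dirichlet (2 ^ (l + 1)) x - dirichlet (2 ^ l) x else 0) := by
      intro l _
      simp
    rw [Finset.sum_congr rfl hsimp]
    have h22 : 2 * k + 2 = 2 * (k + 1) := by ring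
    rw [h22, even_sum_reindex (k + 1) (fun l => dirichlet (2 ^ (l + 1)) x - dirichlet (2 ^ l) x)]
  rw [hF]
  have hle : 2 ^ (2 * k + 1) - 1 ≤ 2 ^ (2 * k + 2) := by
    have := Nat.one_le_two_pow (n := 2 * k + 1)
    have h2 : (2:ℕ) ^ (2 * k + 1) ≤ 2 ^ (2 * k + 2) := Nat.pow_le_pow_right (by norm_num) (by omega)
    omega
  have hsub : mS cc16 (2 ^ (2 * k + 2)) x - mS cc16 (2 ^ (2 * k + 1) - 1) x =
      ∑ j ∈ Finset.Ico (2 ^ (2 * k + 1) - 1) (2 ^ (2 * k + 2)), cc16 j * walsh j x := by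
    unfold mS
    rw [Finset.sum_Ico_eq_sub _ hle]
  rw [hsub]
  have hmem : 2 ^ (2 * k + 1) - 1 ∈ Finset.Ico (2 ^ (2 * k + 1) - 1) (2 ^ (2 * k + 2)) := by
    rw [Finset.mem_Ico]
    refine ⟨le_rfl, ?_⟩
    have := Nat.one_le_two_pow (n := 2 * k + 1)
    have h2 : (2:ℕ) ^ (2 * k + 1) < 2 ^ (2 * k + 2) := two_pow_lt_iff.mpr (by omega)
    omega
  have hzero : ∀ j ∈ Finset.Ico (2 ^ (2 * k + 1) - 1) (2 ^ (2 * k + 2)),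
      j ≠ 2 ^ (2 * k + 1) - 1 → cc16 j * walsh j x = 0 := by
    intro j hj hne
    rw [Finset.mem_Ico] at hj
    have hj1 : 2 ^ (2 * k + 1) ≤ j := by
      have := Nat.one_le_two_pow (n := 2 * k + 1)
      omega
    rw [cc16_eq_zero_odd (i := k) hj1 hj.2, zero_mul]
  rw [Finset.sum_eq_single_of_mem _ hmem hzero]
  have h1 : (2:ℕ) ^ (2 * k) < 2 ^ (2 * k + 1) := two_pow_lt_iff.mpr (by omega)
  have h2 := Nat.one_le_two_pow (n := 2 * k + 1)
  rw [cc16_eq_one (i := k) (by omega) (by omega), one_mul]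

lemma weakLp_lower {p : ℝ} (hp : 0 < p) (k : ℕ) :
    (2:ℝ≥0∞)⁻¹ * ((2:ℝ≥0∞)⁻¹) ^ (1 / p) ≤
      weakLp p (fun x => F16 x - mS cc16 (2 ^ (2 * k + 1) - 1) x) := by
  have hsub : (cyl (2 * k + 2))ᶜ ⊆
      {x : G2 | ((( 2⁻¹ : NNReal)) : ℝ) < |F16 x - mS cc16 (2 ^ (2 * k + 1) - 1) x|} := by
    intro x hx
    have := diff_eq_walsh (k := k) (x := x) hx
    simp only [Set.mem_setOf_eq, this, abs_walsh]
    norm_num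
  have hmu : (2:ℝ≥0∞)⁻¹ ≤
      muG {x : G2 | (((2⁻¹ : NNReal)) : ℝ) < |F16 x - mS cc16 (2 ^ (2 * k + 1) - 1) x|} := by
    have h1 : (1:ℝ≥0∞) ≤ muG (cyl (2 * k + 2)) + muG (cyl (2 * k + 2))ᶜ := by
      rw [← muG_univ]
      exact le_trans (measure_mono (by rw [Set.union_compl_self])) (measure_union_le _ _)
    have h2 : muG (cyl (2 * k + 2)) ≤ 2⁻¹ := by
      refine le_trans (muG_cyl_le _) ?_
      rw [ENNReal.inv_le_inv (a := (2:ℝ≥0∞) ^ (2 * k + 2)) (b := 2)]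
      exact le_self_pow₀ (by norm_num) (by omega)
    have h3 : (1:ℝ≥0∞) - 2⁻¹ ≤ muG (cyl (2 * k + 2))ᶜ := by
      refine le_trans (tsub_le_tsub_left h2 1) ?_
      rw [tsub_le_iff_left]
      exact h1
    rw [ENNReal.one_sub_inv_two] at h3
    exact le_trans h3 (measure_mono hsub)
  have hle : (2:ℝ≥0∞)⁻¹ * ((2:ℝ≥0∞)⁻¹) ^ (1 / p) ≤
      ((2⁻¹ : NNReal) : ℝ≥0∞) *
        (muG {x : G2 | (((2⁻¹ : NNReal)) : ℝ) < |F16 x - mS cc16 (2 ^ (2 * k + 1) - 1) x|}) ^ (1 / p) := by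
    have hc : ((2⁻¹ : NNReal) : ℝ≥0∞) = (2:ℝ≥0∞)⁻¹ := by
      simp
    rw [hc]
    exact mul_le_mul_right (ENNReal.rpow_le_rpow hmu (by positivity)) _
  exact le_trans hle (le_iSup (fun t : NNReal =>
    (t : ℝ≥0∞) * (muG {x : G2 | (t : ℝ) < |F16 x - mS cc16 (2 ^ (2 * k + 1) - 1) x|}) ^ (1 / p))
    (2⁻¹ : NNReal))

lemma c0_pos {p : ℝ} (hp : 0 < p) : 0 < (2:ℝ≥0∞)⁻¹ * ((2:ℝ≥0∞)⁻¹) ^ (1 / p) := by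
  apply ENNReal.mul_pos
  · norm_num
  · exact (ENNReal.rpow_pos (by norm_num) (by norm_num)).ne'

lemma conj3 {p : ℝ} (hp : 0 < p) :
    0 < Filter.atTop.limsup
        (fun k : ℕ => weakLp p (fun x => F16 x - mS cc16 (2 ^ (2 * k + 1) - 1) x)) := by
  refine lt_of_lt_of_le (c0_pos hp) ?_
  apply Filter.le_limsup_of_frequently_le
  · exact Filter.Frequently.of_forall (fun k => weakLp_lower hp k)
  · exact ⟨⊤, Filter.Eventually.of_forall (fun k => le_top)⟩

lemma conj4 {p : ℝ} (hp : 0 < p) :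
    ¬ Tendsto (fun k : ℕ => weakLp p (fun x => F16 x - mS cc16 (2 ^ (2 * k + 1) - 1) x))
        atTop (nhds 0) := by
  intro hT
  have hev := hT.eventually (Iio_mem_nhds (c0_pos hp))
  obtain ⟨k, hk⟩ := hev.exists
  exact absurd (weakLp_lower hp k) (not_le.mpr hk)

theorem stmt16 (p : ℝ) (hp : 0 < p) (hp1 : p < 1) :
    mHp p cc16 < ⊤ ∧
    (∃ C : ℝ, 0 < C ∧ ∀ n : ℕ,
      mHp p (fun j => if j < 2 ^ (2 * n) then 0 else cc16 j) ≤
        ENNReal.ofReal (C * (2 : ℝ) ^ (-(2 * n : ℝ) * (1 / p - 1)))) ∧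
    0 < Filter.atTop.limsup
        (fun k : ℕ => weakLp p (fun x => F16 x - mS cc16 (2 ^ (2 * k + 1) - 1) x)) ∧
    ¬ Tendsto (fun k : ℕ => weakLp p (fun x => F16 x - mS cc16 (2 ^ (2 * k + 1) - 1) x))
        atTop (nhds 0) :=
  ⟨conj1 hp hp1, conj2 hp hp1, conj3 hp, conj4 hp⟩

end
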